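/- The rewrite system R(F̂_ω) is canonical: the rewrite relation →_ω it generates on numeric terms T^ω is terminating (strongly normalizing) and confluent. -/

import Mathlib

namespace Schematic

/-- Numeric terms `T^ω`: built from `0̄`, parameters (indexed by `ℕ`), the successor `s`, and
defined numeric function symbols `f̂ ∈ F̂_ω` (the symbol type `F`), where `f̂ ∈ F` has arity
`ar f + 1`. -/
inductive NTerm (F : Type) (ar : F → ℕ) : Type where
  | zero : NTerm F ar
  | param : ℕ → NTerm F ar
  | succ : NTerm F ar → NTerm F ar
  | defd : (f : F) → (Fin (ar f + 1) → NTerm F ar) → NTerm F ar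

namespace NTerm

variable {F : Type} {ar : F → ℕ}

/-- The numeral `s^β(0̄)`. -/
def ofNat (F : Type) (ar : F → ℕ) : ℕ → NTerm F ar
  | 0 => zero
  | n + 1 => succ (ofNat F ar n)

/-- Homomorphic substitution of parameters. -/
def subst (σ : ℕ → NTerm F ar) : NTerm F ar → NTerm F ar
  | zero => zero
  | param n => σ n
  | succ t => succ (t.subst σ)
  | defd f ts => defd f fun i => (ts i).subst σ

/-- The parameter `n` occurs in the term. -/
def HasParam (n : ℕ) : NTerm F ar → Prop
  | zero => False
  | param m => m = n
  | succ t => t.HasParam n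
  | defd _ ts => ∃ i, (ts i).HasParam n

/-- The defined symbol `g` occurs in the term. -/
def HasSymb (g : F) : NTerm F ar → Prop
  | zero => False
  | param _ => False
  | succ t => t.HasSymb g
  | defd f ts => f = g ∨ ∃ i, (ts i).HasSymb g

/-- The term contains no defined function symbols (i.e. it belongs to `T^ω₀`). -/
def NoDefd : NTerm F ar → Prop
  | zero => True
  | param _ => True
  | succ t => t.NoDefd
  | defd _ _ => False

/-- The term is a numeral `s^β(0̄)`. -/
def IsNumeral : NTerm F ar → Prop
  | zero => True
  | param _ => False
  | succ t => t.IsNumeral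
  | defd _ _ => False

/-- Evaluation of defined-symbol-free numeric terms under a parameter assignment
(junk value `0` on defined symbols). -/
def eval0 (σ : ℕ → ℕ) : NTerm F ar → ℕ
  | zero => 0
  | param n => σ n
  | succ t => t.eval0 σ + 1
  | defd _ _ => 0

end NTerm

variable {F : Type} {ar : F → ℕ}

/-- The substitution sending parameter `n < k` to `ts n` and fixing all other parameters. -/
def cutSub (k : ℕ) (ts : Fin k → NTerm F ar) : ℕ → NTerm F ar := fun n =>
  if h : n < k then ts ⟨n, h⟩ else NTerm.param n

/-- Like `cutSub` but additionally sending the parameter `k` (the recursion parameter `m`)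
to `u`. -/
def cutSub2 (k : ℕ) (ts : Fin k → NTerm F ar) (u : NTerm F ar) : ℕ → NTerm F ar := fun n =>
  if h : n < k then ts ⟨n, h⟩ else if n = k then u else NTerm.param n

/-- Like `cutSub2` but additionally sending parameter `k + 1` (the placeholder `k` for the
recursive call) to `recc`. -/
def stepSub (k : ℕ) (ts : Fin k → NTerm F ar) (u recc : NTerm F ar) : ℕ → NTerm F ar := fun n =>
  if h : n < k then ts ⟨n, h⟩
  else if n = k then u
  else if n = k + 1 then recc
  else NTerm.param n

/-- Defining equations `D(f̂)` for the numeric defined symbols: for `f̂` of arity `α + 1`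
(`α = ar f̂`), `base f̂ = t_B` uses only the parameters `0,…,α-1` (standing for `n₁,…,n_α`) and
`step f̂ = t_S` uses only the parameters `0,…,α+1`, where parameter `α` stands for `m` and
parameter `α+1` stands for the placeholder `k` of the recursive call
`f̂(n₁,…,n_α,m)`. -/
structure NumDefs (F : Type) (ar : F → ℕ) where
  base : F → NTerm F ar
  step : F → NTerm F ar

/-- Wellformedness of the numeric defining equations with respect to the order `prec` on the
defined symbols: parameter conditions and the condition that all defined symbols occurring in
`t_B, t_S` are `prec`-smaller than `f̂`. -/
structure GoodNumDefs (prec : F → F → Prop) (D : NumDefs F ar) : Prop where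
  base_params : ∀ f n, (D.base f).HasParam n → n < ar f
  step_params : ∀ f n, (D.step f).HasParam n → n < ar f + 2
  base_symbs : ∀ f g, (D.base f).HasSymb g → prec g f
  step_symbs : ∀ f g, (D.step f).HasSymb g → prec g f

end Schematic
namespace Schematic

variable {F : Type} {ar : F → ℕ}

/-- The one-step rewrite relation `→_ω` generated by the rewrite system `R(F̂_ω)`,
obtained by orienting the defining equations from left to right; the rules are applicable
under arbitrary instantiation of the parameters and inside any term context. -/
inductive NStep (D : NumDefs F ar) : NTerm F ar → NTerm F ar → Prop where
  | baseRule (f : F) (ts : Fin (ar f) → NTerm F ar) :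
      NStep D (NTerm.defd f (Fin.snoc ts NTerm.zero)) ((D.base f).subst (cutSub (ar f) ts))
  | stepRule (f : F) (ts : Fin (ar f) → NTerm F ar) (u : NTerm F ar) :
      NStep D (NTerm.defd f (Fin.snoc ts (NTerm.succ u)))
        ((D.step f).subst (stepSub (ar f) ts u (NTerm.defd f (Fin.snoc ts u))))
  | succCong {t t' : NTerm F ar} : NStep D t t' → NStep D (NTerm.succ t) (NTerm.succ t')
  | argCong (f : F) (ts ts' : Fin (ar f + 1) → NTerm F ar) (i : Fin (ar f + 1)) :
      NStep D (ts i) (ts' i) → (∀ j, j ≠ i → ts j = ts' j) →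
      NStep D (NTerm.defd f ts) (NTerm.defd f ts')

end Schematic

namespace Schematic

variable {F : Type} {ar : F → ℕ}

/-! ### Evaluation with an interpretation of the defined symbols -/

/-- Evaluation of numeric terms with an interpretation `J` of the defined symbols. -/
def evalI (J : ∀ f : F, (Fin (ar f + 1) → ℕ) → ℕ) (σ : ℕ → ℕ) : NTerm F ar → ℕ
  | .zero => 0
  | .param n => σ n
  | .succ t => evalI J σ t + 1
  | .defd f ts => J f fun i => evalI J σ (ts i)

theorem evalI_congr_params {J : ∀ f : F, (Fin (ar f + 1) → ℕ) → ℕ} {σ₁ σ₂ : ℕ → ℕ}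
    (t : NTerm F ar) (h : ∀ n, t.HasParam n → σ₁ n = σ₂ n) :
    evalI J σ₁ t = evalI J σ₂ t := by
  induction t with
  | zero => rfl
  | param n => exact h n rfl
  | succ t ih => simp [evalI, ih h]
  | defd f ts ih =>
      simp only [evalI]
      congr 1
      funext i
      exact ih i fun n hn => h n ⟨i, hn⟩

theorem evalI_congr_symbs {J₁ J₂ : ∀ f : F, (Fin (ar f + 1) → ℕ) → ℕ} {σ : ℕ → ℕ}
    (t : NTerm F ar) (h : ∀ g, t.HasSymb g → J₁ g = J₂ g) :
    evalI J₁ σ t = evalI J₂ σ t := by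
  induction t with
  | zero => rfl
  | param n => rfl
  | succ t ih => simp [evalI, ih h]
  | defd f ts ih =>
      simp only [evalI]
      rw [h f (Or.inl rfl)]
      congr 1
      funext i
      exact ih i fun g hg => h g (Or.inr ⟨i, hg⟩)

theorem evalI_subst' {J : ∀ f : F, (Fin (ar f + 1) → ℕ) → ℕ} (σ : ℕ → ℕ)
    (τ : ℕ → NTerm F ar) (t : NTerm F ar) :
    evalI J σ (t.subst τ) = evalI J (fun n => evalI J σ (τ n)) t := by
  induction t with
  | zero => rfl
  | param n => rfl
  | succ t ih => simp [NTerm.subst, evalI, ih]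
  | defd f ts ih => simp only [NTerm.subst, evalI]; congr 1; funext i; exact ih i

/-- Pointwise monotonicity of a function of several natural arguments. -/
def MonoV {m : ℕ} (g : (Fin m → ℕ) → ℕ) : Prop :=
  ∀ v w : Fin m → ℕ, (∀ i, v i ≤ w i) → g v ≤ g w

theorem evalI_mono {J : ∀ f : F, (Fin (ar f + 1) → ℕ) → ℕ} (t : NTerm F ar)
    (hJ : ∀ g, t.HasSymb g → MonoV (J g)) {σ₁ σ₂ : ℕ → ℕ} (hσ : ∀ n, σ₁ n ≤ σ₂ n) :
    evalI J σ₁ t ≤ evalI J σ₂ t := by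
  induction t with
  | zero => exact le_rfl
  | param n => exact hσ n
  | succ t ih => exact Nat.succ_le_succ (ih hJ)
  | defd f ts ih =>
      exact hJ f (Or.inl rfl) _ _ fun i => ih i fun g hg => hJ g (Or.inr ⟨i, hg⟩)

/-! ### The interpretation of the defined symbols -/

def baseσ {k : ℕ} (xs : Fin k → ℕ) : ℕ → ℕ := fun n =>
  if h : n < k then xs ⟨n, h⟩ else 0

def stepσ {k : ℕ} (xs : Fin k → ℕ) (y r : ℕ) : ℕ → ℕ := fun n =>
  if h : n < k then xs ⟨n, h⟩ else if n = k then y else if n = k + 1 then r else 0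

def mkF (D : NumDefs F ar) (J : ∀ f : F, (Fin (ar f + 1) → ℕ) → ℕ) (f : F)
    (xs : Fin (ar f) → ℕ) : ℕ → ℕ
  | 0 => evalI J (baseσ xs) (D.base f) + (∑ i, xs i) + 1
  | y + 1 => evalI J (stepσ xs y (mkF D J f xs y)) (D.step f) + mkF D J f xs y + 1

theorem mkF_congr {D : NumDefs F ar} {J₁ J₂ : ∀ f : F, (Fin (ar f + 1) → ℕ) → ℕ} {f : F}
    (hb : ∀ g, (D.base f).HasSymb g → J₁ g = J₂ g)
    (hs : ∀ g, (D.step f).HasSymb g → J₁ g = J₂ g)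
    (xs : Fin (ar f) → ℕ) : ∀ y, mkF D J₁ f xs y = mkF D J₂ f xs y
  | 0 => by simp only [mkF]; rw [evalI_congr_symbs _ hb]
  | y + 1 => by
      simp only [mkF]
      rw [mkF_congr hb hs xs y, evalI_congr_symbs _ hs]

variable {prec : F → F → Prop}

noncomputable def Intp (D : NumDefs F ar) (hwf : WellFounded prec) :
    ∀ f : F, (Fin (ar f + 1) → ℕ) → ℕ :=
  hwf.fix fun f IH v =>
    mkF D (fun g => @dite _ (prec g f) (Classical.dec _) (fun h => IH g h) fun _ _ => 0) f
      (Fin.init v) (v (Fin.last _))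

theorem Intp_eq {D : NumDefs F ar} (hwf : WellFounded prec) (hD : GoodNumDefs prec D)
    (f : F) (v : Fin (ar f + 1) → ℕ) :
    Intp D hwf f v = mkF D (Intp D hwf) f (Fin.init v) (v (Fin.last _)) := by
  unfold Intp
  rw [WellFounded.fix_eq]
  exact mkF_congr
    (fun g hg => dif_pos (hD.base_symbs f g hg))
    (fun g hg => dif_pos (hD.step_symbs f g hg)) _ _

theorem Intp_snoc {D : NumDefs F ar} (hwf : WellFounded prec) (hD : GoodNumDefs prec D)
    (f : F) (xs : Fin (ar f) → ℕ) (y : ℕ) :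
    Intp D hwf f (Fin.snoc xs y) = mkF D (Intp D hwf) f xs y := by
  rw [Intp_eq hwf hD]
  simp [Fin.init_snoc, Fin.snoc_last]

/-! ### Monotonicity -/

theorem baseσ_mono {k : ℕ} {xs xs' : Fin k → ℕ} (h : ∀ i, xs i ≤ xs' i) (n : ℕ) :
    baseσ xs n ≤ baseσ xs' n := by
  unfold baseσ; split
  · exact h _
  · exact le_rfl

theorem stepσ_mono {k : ℕ} {xs xs' : Fin k → ℕ} (h : ∀ i, xs i ≤ xs' i) (y y' r r' : ℕ)
    (hy : y ≤ y') (hr : r ≤ r') (n : ℕ) : stepσ xs y r n ≤ stepσ xs' y' r' n := by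
  unfold stepσ; split
  · exact h _
  · split
    · exact hy
    · split
      · exact hr
      · exact le_rfl

theorem mkF_mono_xs {D : NumDefs F ar} {J : ∀ f : F, (Fin (ar f + 1) → ℕ) → ℕ} {f : F}
    (hb : ∀ g, (D.base f).HasSymb g → MonoV (J g))
    (hs : ∀ g, (D.step f).HasSymb g → MonoV (J g))
    {xs xs' : Fin (ar f) → ℕ} (h : ∀ i, xs i ≤ xs' i) :
    ∀ y, mkF D J f xs y ≤ mkF D J f xs' y
  | 0 => by
      simp only [mkF]
      have h1 := evalI_mono (D.base f) hb (baseσ_mono h)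
      have h2 : (∑ i, xs i) ≤ ∑ i, xs' i := Finset.sum_le_sum fun i _ => h i
      omega
  | y + 1 => by
      simp only [mkF]
      have hm := mkF_mono_xs hb hs h y
      have h1 := evalI_mono (D.step f) hs (stepσ_mono h y y _ _ le_rfl hm)
      omega

theorem mkF_le_succ {D : NumDefs F ar} {J : ∀ f : F, (Fin (ar f + 1) → ℕ) → ℕ} {f : F}
    (xs : Fin (ar f) → ℕ) (y : ℕ) : mkF D J f xs y < mkF D J f xs (y + 1) := by
  simp only [mkF]; omega

theorem mkF_mono_y {D : NumDefs F ar} {J : ∀ f : F, (Fin (ar f + 1) → ℕ) → ℕ} {f : F}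
    (xs : Fin (ar f) → ℕ) : Monotone (mkF D J f xs) :=
  monotone_nat_of_le_succ fun y => (mkF_le_succ xs y).le

theorem mkF_strict_y {D : NumDefs F ar} {J : ∀ f : F, (Fin (ar f + 1) → ℕ) → ℕ} {f : F}
    (xs : Fin (ar f) → ℕ) {y y' : ℕ} (h : y < y') : mkF D J f xs y < mkF D J f xs y' :=
  lt_of_lt_of_le (mkF_le_succ xs y) (mkF_mono_y xs h)

theorem mkF_strict_xs {D : NumDefs F ar} {J : ∀ f : F, (Fin (ar f + 1) → ℕ) → ℕ} {f : F}
    (hb : ∀ g, (D.base f).HasSymb g → MonoV (J g))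
    (hs : ∀ g, (D.step f).HasSymb g → MonoV (J g))
    {xs xs' : Fin (ar f) → ℕ} (h : ∀ i, xs i ≤ xs' i) (j : Fin (ar f)) (hj : xs j < xs' j) :
    ∀ y, mkF D J f xs y < mkF D J f xs' y
  | 0 => by
      simp only [mkF]
      have h1 := evalI_mono (D.base f) hb (baseσ_mono h)
      have h2 : (∑ i, xs i) < ∑ i, xs' i :=
        Finset.sum_lt_sum (fun i _ => h i) ⟨j, Finset.mem_univ j, hj⟩
      omega
  | y + 1 => by
      simp only [mkF]
      have hm := mkF_strict_xs hb hs h j hj y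
      have h1 := evalI_mono (D.step f) hs (stepσ_mono h y y _ _ le_rfl hm.le)
      omega

theorem Intp_mono {D : NumDefs F ar} (hwf : WellFounded prec) (hD : GoodNumDefs prec D) :
    ∀ f : F, MonoV (Intp D hwf f) := by
  intro f
  induction f using hwf.induction with
  | _ f IH =>
    intro v w hvw
    rw [Intp_eq hwf hD, Intp_eq hwf hD]
    have hb : ∀ g, (D.base f).HasSymb g → MonoV (Intp D hwf g) :=
      fun g hg => IH g (hD.base_symbs f g hg)
    have hs : ∀ g, (D.step f).HasSymb g → MonoV (Intp D hwf g) :=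
      fun g hg => IH g (hD.step_symbs f g hg)
    calc mkF D (Intp D hwf) f (Fin.init v) (v (Fin.last _))
        ≤ mkF D (Intp D hwf) f (Fin.init w) (v (Fin.last _)) :=
          mkF_mono_xs hb hs (fun i => hvw i.castSucc) _
      _ ≤ mkF D (Intp D hwf) f (Fin.init w) (w (Fin.last _)) :=
          mkF_mono_y _ (hvw (Fin.last _))

theorem Intp_strict {D : NumDefs F ar} (hwf : WellFounded prec) (hD : GoodNumDefs prec D)
    (f : F) {v w : Fin (ar f + 1) → ℕ} (hvw : ∀ i, v i ≤ w i) (j : Fin (ar f + 1))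
    (hj : v j < w j) : Intp D hwf f v < Intp D hwf f w := by
  have hb : ∀ g, (D.base f).HasSymb g → MonoV (Intp D hwf g) :=
    fun g hg => Intp_mono hwf hD g
  have hs : ∀ g, (D.step f).HasSymb g → MonoV (Intp D hwf g) :=
    fun g hg => Intp_mono hwf hD g
  rw [Intp_eq hwf hD, Intp_eq hwf hD]
  induction j using Fin.lastCases with
  | last =>
      calc mkF D (Intp D hwf) f (Fin.init v) (v (Fin.last _))
          ≤ mkF D (Intp D hwf) f (Fin.init w) (v (Fin.last _)) :=
            mkF_mono_xs hb hs (fun i => hvw i.castSucc) _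
        _ < mkF D (Intp D hwf) f (Fin.init w) (w (Fin.last _)) := mkF_strict_y _ hj
  | cast j₀ =>
      calc mkF D (Intp D hwf) f (Fin.init v) (v (Fin.last _))
          < mkF D (Intp D hwf) f (Fin.init w) (v (Fin.last _)) :=
            mkF_strict_xs hb hs (fun i => hvw i.castSucc) j₀ hj _
        _ ≤ mkF D (Intp D hwf) f (Fin.init w) (w (Fin.last _)) :=
          mkF_mono_y _ (hvw (Fin.last _))

/-! ### Every rewrite step strictly decreases the interpretation -/

theorem evalI_snoc {J : ∀ f : F, (Fin (ar f + 1) → ℕ) → ℕ} (σ : ℕ → ℕ) {k : ℕ}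
    (ts : Fin k → NTerm F ar) (x : NTerm F ar) :
    (fun i => evalI J σ ((Fin.snoc ts x : Fin (k + 1) → NTerm F ar) i)) =
      Fin.snoc (fun i => evalI J σ (ts i)) (evalI J σ x) := by
  funext i
  induction i using Fin.lastCases with
  | last => simp
  | cast i₀ => simp

theorem step_dec {D : NumDefs F ar} (hwf : WellFounded prec) (hD : GoodNumDefs prec D)
    {t t' : NTerm F ar} (h : NStep D t t') (σ : ℕ → ℕ) :
    evalI (Intp D hwf) σ t' < evalI (Intp D hwf) σ t := by
  induction h generalizing σ with
  | baseRule f ts =>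
      have h0 : evalI (Intp D hwf) σ (NTerm.zero : NTerm F ar) = 0 := rfl
      have hL : evalI (Intp D hwf) σ (NTerm.defd f (Fin.snoc ts NTerm.zero)) =
          mkF D (Intp D hwf) f (fun i => evalI (Intp D hwf) σ (ts i)) 0 := by
        show Intp D hwf f _ = _
        rw [evalI_snoc, h0, Intp_snoc hwf hD]
      have hR : evalI (Intp D hwf) σ ((D.base f).subst (cutSub (ar f) ts)) =
          evalI (Intp D hwf) (baseσ fun i => evalI (Intp D hwf) σ (ts i)) (D.base f) := by
        rw [evalI_subst']
        refine evalI_congr_params _ fun n hn => ?_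
        have hnk := hD.base_params f n hn
        simp [cutSub, baseσ, dif_pos hnk]
      rw [hL, hR]
      simp only [mkF]
      omega
  | stepRule f ts u =>
      have hsucc : evalI (Intp D hwf) σ (NTerm.succ u) = evalI (Intp D hwf) σ u + 1 := rfl
      have hL : evalI (Intp D hwf) σ (NTerm.defd f (Fin.snoc ts (NTerm.succ u))) =
          mkF D (Intp D hwf) f (fun i => evalI (Intp D hwf) σ (ts i))
            (evalI (Intp D hwf) σ u + 1) := by
        show Intp D hwf f _ = _
        rw [evalI_snoc, hsucc, Intp_snoc hwf hD]
      have hrec : evalI (Intp D hwf) σ (NTerm.defd f (Fin.snoc ts u)) =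
          mkF D (Intp D hwf) f (fun i => evalI (Intp D hwf) σ (ts i))
            (evalI (Intp D hwf) σ u) := by
        show Intp D hwf f _ = _
        rw [evalI_snoc, Intp_snoc hwf hD]
      have hR : evalI (Intp D hwf) σ ((D.step f).subst
            (stepSub (ar f) ts u (NTerm.defd f (Fin.snoc ts u)))) =
          evalI (Intp D hwf)
            (stepσ (fun i => evalI (Intp D hwf) σ (ts i)) (evalI (Intp D hwf) σ u)
              (mkF D (Intp D hwf) f (fun i => evalI (Intp D hwf) σ (ts i))
                (evalI (Intp D hwf) σ u))) (D.step f) := by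
        rw [evalI_subst']
        refine evalI_congr_params _ fun n hn => ?_
        have hnk := hD.step_params f n hn
        rcases lt_trichotomy n (ar f) with hlt | rfl | hgt
        · simp [stepSub, stepσ, dif_pos hlt]
        · simp [stepSub, stepσ]
        · have hn1 : n = ar f + 1 := by omega
          subst hn1
          simp only [stepSub, stepσ]
          rw [dif_neg (by omega : ¬ ar f + 1 < ar f),
            if_neg (by omega : ¬ ar f + 1 = ar f)]
          simpa using hrec
      rw [hL, hR]
      simp only [mkF]
      omega
  | succCong h ih => exact Nat.succ_lt_succ (ih σ)
  | argCong f ts ts' i hstep hoff ih =>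
      refine Intp_strict hwf hD f (v := fun j => evalI (Intp D hwf) σ (ts' j))
        (w := fun j => evalI (Intp D hwf) σ (ts j)) ?_ i (ih σ)
      intro j
      by_cases hj : j = i
      · subst hj; exact (ih σ).le
      · rw [hoff j hj]

/-! ### Basic inversion lemmas -/

theorem no_step_zero {D : NumDefs F ar} {u : NTerm F ar} (h : NStep D NTerm.zero u) :
    False := by cases h

theorem step_succ_inv {D : NumDefs F ar} {t u : NTerm F ar}
    (h : NStep D (NTerm.succ t) u) : ∃ t', u = NTerm.succ t' ∧ NStep D t t' := by
  cases h with
  | succCong h => exact ⟨_, rfl, h⟩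

theorem defd_inv {D : NumDefs F ar} {f : F} {v : Fin (ar f + 1) → NTerm F ar}
    {u : NTerm F ar} (h : NStep D (NTerm.defd f v) u) :
    (∃ ts, v = Fin.snoc ts NTerm.zero ∧ u = (D.base f).subst (cutSub (ar f) ts)) ∨
    (∃ ts w, v = Fin.snoc ts (NTerm.succ w) ∧
      u = (D.step f).subst (stepSub (ar f) ts w (NTerm.defd f (Fin.snoc ts w)))) ∨
    (∃ i w, NStep D (v i) w ∧ u = NTerm.defd f (Function.update v i w)) := by
  cases h with
  | baseRule f ts => exact Or.inl ⟨ts, rfl, rfl⟩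
  | stepRule f ts w => exact Or.inr (Or.inl ⟨ts, w, rfl, rfl⟩)
  | argCong f ts ts' i hstep hoff =>
      refine Or.inr (Or.inr ⟨i, ts' i, hstep, ?_⟩)
      congr 1
      funext j
      by_cases hj : j = i
      · subst hj; simp
      · rw [Function.update_of_ne hj, hoff j hj]

/-! ### Multi-step congruences -/

theorem rt_succ {D : NumDefs F ar} {t t' : NTerm F ar}
    (h : Relation.ReflTransGen (NStep D) t t') :
    Relation.ReflTransGen (NStep D) (NTerm.succ t) (NTerm.succ t') :=
  Relation.ReflTransGen.lift NTerm.succ (fun _ _ h => NStep.succCong h) _ _ h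

theorem step_update {D : NumDefs F ar} (f : F) (v : Fin (ar f + 1) → NTerm F ar)
    (i : Fin (ar f + 1)) {w : NTerm F ar} (h : NStep D (v i) w) :
    NStep D (NTerm.defd f v) (NTerm.defd f (Function.update v i w)) := by
  refine NStep.argCong f v (Function.update v i w) i (by simpa using h) ?_
  intro j hj
  rw [Function.update_of_ne hj]

theorem rt_update {D : NumDefs F ar} (f : F) (v : Fin (ar f + 1) → NTerm F ar)
    (i : Fin (ar f + 1)) {x : NTerm F ar}
    (h : Relation.ReflTransGen (NStep D) (v i) x) :
    Relation.ReflTransGen (NStep D) (NTerm.defd f v)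
      (NTerm.defd f (Function.update v i x)) := by
  induction h with
  | refl => rw [Function.update_eq_self]
  | tail hab hbc ih =>
      refine ih.tail ?_
      have := step_update f (Function.update v i _) i (by simpa using hbc)
      rwa [Function.update_idem] at this

theorem rt_args {D : NumDefs F ar} (f : F) (v w : Fin (ar f + 1) → NTerm F ar)
    (h : ∀ i, Relation.ReflTransGen (NStep D) (v i) (w i)) :
    Relation.ReflTransGen (NStep D) (NTerm.defd f v) (NTerm.defd f w) := by
  have key : ∀ s : Finset (Fin (ar f + 1)),
      Relation.ReflTransGen (NStep D) (NTerm.defd f v)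
        (NTerm.defd f (fun i => if i ∈ s then w i else v i)) := by
    intro s
    induction s using Finset.induction with
    | empty =>
        have hv : (fun i => if i ∈ (∅ : Finset (Fin (ar f + 1))) then w i else v i) = v := by
          funext i; simp
        rw [hv]
    | @insert j s hjs ih =>
        have heq : (fun i => if i ∈ insert j s then w i else v i) =
            Function.update (fun i => if i ∈ s then w i else v i) j (w j) := by
          funext i
          by_cases hij : i = j
          · subst hij; simp
          · simp [Function.update_of_ne hij, hij]
        rw [heq]
        refine ih.trans (rt_update f _ j ?_)
        simpa [hjs] using h j
  simpa using key Finset.univ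

theorem rt_subst {D : NumDefs F ar} (t : NTerm F ar) {σ σ' : ℕ → NTerm F ar}
    (h : ∀ n, Relation.ReflTransGen (NStep D) (σ n) (σ' n)) :
    Relation.ReflTransGen (NStep D) (t.subst σ) (t.subst σ') := by
  induction t with
  | zero => exact Relation.ReflTransGen.refl
  | param n => exact h n
  | succ t ih => exact rt_succ ih
  | defd f ts ih => exact rt_args f _ _ fun i => ih i

/-! ### Helper lemmas for local confluence -/

theorem update_snoc_castSucc {k : ℕ} (ts : Fin k → NTerm F ar) (x : NTerm F ar)
    (j : Fin k) (w : NTerm F ar) :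
    Function.update (Fin.snoc ts x : Fin (k + 1) → NTerm F ar) j.castSucc w =
      (Fin.snoc (Function.update ts j w) x : Fin (k + 1) → NTerm F ar) := by
  funext m
  induction m using Fin.lastCases with
  | last =>
      rw [Function.update_of_ne (Fin.castSucc_lt_last j).ne', Fin.snoc_last, Fin.snoc_last]
  | cast m₀ =>
      by_cases hm : m₀ = j
      · subst hm; simp
      · rw [Function.update_of_ne (fun h => hm (Fin.castSucc_inj.mp h)), Fin.snoc_castSucc,
          Fin.snoc_castSucc, Function.update_of_ne hm]

/-- Joins a root rewrite (base rule) with a rewrite in an argument. -/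
theorem join_base_arg {D : NumDefs F ar} (f : F) (ts : Fin (ar f) → NTerm F ar)
    (i : Fin (ar f + 1)) (w : NTerm F ar)
    (hstep : NStep D ((Fin.snoc ts NTerm.zero : Fin (ar f + 1) → NTerm F ar) i) w) :
    ∃ d, Relation.ReflTransGen (NStep D) ((D.base f).subst (cutSub (ar f) ts)) d ∧
      Relation.ReflTransGen (NStep D)
        (NTerm.defd f (Function.update (Fin.snoc ts NTerm.zero) i w)) d := by
  induction i using Fin.lastCases with
  | last => exact absurd hstep (by rw [Fin.snoc_last]; exact no_step_zero)
  | cast j =>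
      rw [Fin.snoc_castSucc] at hstep
      refine ⟨(D.base f).subst (cutSub (ar f) (Function.update ts j w)), ?_, ?_⟩
      · refine rt_subst _ fun n => ?_
        unfold cutSub
        split
        · rename_i hn
          by_cases hj : (⟨n, hn⟩ : Fin (ar f)) = j
          · subst hj; rw [Function.update_self]; exact Relation.ReflTransGen.single hstep
          · rw [Function.update_of_ne hj]
        · exact Relation.ReflTransGen.refl
      · rw [update_snoc_castSucc]
        exact Relation.ReflTransGen.single (NStep.baseRule f _)

theorem step_snoc_last {D : NumDefs F ar} (f : F) {k : ℕ} (hk : k = ar f)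
    (ts : Fin (ar f) → NTerm F ar) {x y : NTerm F ar} (h : NStep D x y) :
    NStep D (NTerm.defd f (Fin.snoc ts x)) (NTerm.defd f (Fin.snoc ts y)) := by
  have := step_update f (Fin.snoc ts x) (Fin.last _) (by rw [Fin.snoc_last]; exact h)
  rwa [Fin.update_snoc_last] at this

/-- Joins a root rewrite (step rule) with a rewrite in an argument. -/
theorem join_step_arg {D : NumDefs F ar} (f : F) (ts : Fin (ar f) → NTerm F ar)
    (u : NTerm F ar) (i : Fin (ar f + 1)) (w : NTerm F ar)
    (hstep : NStep D ((Fin.snoc ts (NTerm.succ u) : Fin (ar f + 1) → NTerm F ar) i) w) :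
    ∃ d, Relation.ReflTransGen (NStep D)
        ((D.step f).subst (stepSub (ar f) ts u (NTerm.defd f (Fin.snoc ts u)))) d ∧
      Relation.ReflTransGen (NStep D)
        (NTerm.defd f (Function.update (Fin.snoc ts (NTerm.succ u)) i w)) d := by
  induction i using Fin.lastCases with
  | last =>
      rw [Fin.snoc_last] at hstep
      obtain ⟨u', rfl, hu⟩ := step_succ_inv hstep
      refine ⟨(D.step f).subst (stepSub (ar f) ts u'
        (NTerm.defd f (Fin.snoc ts u'))), ?_, ?_⟩
      · refine rt_subst _ fun n => ?_
        unfold stepSub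
        split
        · exact Relation.ReflTransGen.refl
        · split
          · exact Relation.ReflTransGen.single hu
          · split
            · exact Relation.ReflTransGen.single (step_snoc_last f rfl ts hu)
            · exact Relation.ReflTransGen.refl
      · rw [Fin.update_snoc_last]
        exact Relation.ReflTransGen.single (NStep.stepRule f ts u')
  | cast j =>
      rw [Fin.snoc_castSucc] at hstep
      refine ⟨(D.step f).subst (stepSub (ar f) (Function.update ts j w) u
        (NTerm.defd f (Fin.snoc (Function.update ts j w) u))), ?_, ?_⟩
      · refine rt_subst _ fun n => ?_
        unfold stepSub
        split
        · rename_i hn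
          by_cases hj : (⟨n, hn⟩ : Fin (ar f)) = j
          · subst hj; rw [Function.update_self]; exact Relation.ReflTransGen.single hstep
          · rw [Function.update_of_ne hj]
        · split
          · exact Relation.ReflTransGen.refl
          · split
            · refine Relation.ReflTransGen.single ?_
              have := step_update f (Fin.snoc ts u) j.castSucc
                (by rw [Fin.snoc_castSucc]; exact hstep)
              rwa [update_snoc_castSucc] at this
            · exact Relation.ReflTransGen.refl
      · rw [update_snoc_castSucc]
        exact Relation.ReflTransGen.single (NStep.stepRule f _ u)

/-! ### Local confluence -/

theorem snoc_zero_inj {k : ℕ} {ts ts' : Fin k → NTerm F ar} {x : NTerm F ar}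
    (h : (Fin.snoc ts x : Fin (k + 1) → NTerm F ar) = Fin.snoc ts' x) : ts = ts' := by
  funext j
  have := congrFun h j.castSucc
  simpa using this

theorem locConf {D : NumDefs F ar} (t : NTerm F ar) :
    ∀ a b, NStep D t a → NStep D t b →
      ∃ d, Relation.ReflTransGen (NStep D) a d ∧ Relation.ReflTransGen (NStep D) b d := by
  induction t with
  | zero => exact fun a b ha _ => absurd ha no_step_zero
  | param n => exact fun a b ha _ => by cases ha
  | succ t ih =>
      intro a b ha hb
      obtain ⟨a', rfl, ha'⟩ := step_succ_inv ha
      obtain ⟨b', rfl, hb'⟩ := step_succ_inv hb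
      obtain ⟨d, h1, h2⟩ := ih _ _ ha' hb'
      exact ⟨NTerm.succ d, rt_succ h1, rt_succ h2⟩
  | defd f v ih =>
      intro a b ha hb
      rcases defd_inv ha with ⟨ts, rfl, rfl⟩ | ⟨ts, u, rfl, rfl⟩ | ⟨i, w, hstep, rfl⟩
      · -- a by base rule
        rcases defd_inv hb with ⟨ts', h2, rfl⟩ | ⟨ts', u', h2, rfl⟩ | ⟨i, w, hstep, rfl⟩
        · obtain rfl : ts = ts' := by
            funext j
            have := congrFun h2 j.castSucc
            simpa using this
          exact ⟨_, Relation.ReflTransGen.refl, Relation.ReflTransGen.refl⟩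
        · exact absurd (congrFun h2 (Fin.last _)) (by simp)
        · exact join_base_arg f ts i w hstep
      · -- a by step rule
        rcases defd_inv hb with ⟨ts', h2, rfl⟩ | ⟨ts', u', h2, rfl⟩ | ⟨i, w, hstep, rfl⟩
        · exact absurd (congrFun h2 (Fin.last _)) (by simp)
        · have hlast := congrFun h2 (Fin.last _)
          simp only [Fin.snoc_last] at hlast
          obtain rfl : u = u' := by injection hlast
          obtain rfl : ts = ts' := by
            funext j
            have := congrFun h2 j.castSucc
            simpa using this
          exact ⟨_, Relation.ReflTransGen.refl, Relation.ReflTransGen.refl⟩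
        · exact join_step_arg f ts u i w hstep
      · -- a by argument rewrite
        rcases defd_inv hb with ⟨ts', rfl, rfl⟩ | ⟨ts', u', rfl, rfl⟩ | ⟨i', w', hstep', rfl⟩
        · obtain ⟨d, h1, h2⟩ := join_base_arg f ts' i w hstep
          exact ⟨d, h2, h1⟩
        · obtain ⟨d, h1, h2⟩ := join_step_arg f ts' u' i w hstep
          exact ⟨d, h2, h1⟩
        · by_cases hii : i = i'
          · subst hii
            obtain ⟨d, h1, h2⟩ := ih i _ _ hstep hstep'
            refine ⟨NTerm.defd f (Function.update v i d), ?_, ?_⟩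
            · have := rt_update f (Function.update v i w) i (x := d) (by simpa using h1)
              rwa [Function.update_idem] at this
            · have := rt_update f (Function.update v i w') i (x := d) (by simpa using h2)
              rwa [Function.update_idem] at this
          · refine ⟨NTerm.defd f (Function.update (Function.update v i w) i' w'), ?_, ?_⟩
            · refine Relation.ReflTransGen.single ?_
              exact step_update f _ i' (by rwa [Function.update_of_ne (Ne.symm hii)])
            · refine Relation.ReflTransGen.single ?_
              have := step_update f (Function.update v i' w') i
                (w := w) (by rwa [Function.update_of_ne hii])
              rwa [Function.update_comm (Ne.symm hii)] at this

/-! ### Newman's lemma -/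

theorem newman {α : Type*} {r : α → α → Prop}
    (hwf : WellFounded fun t s => r s t)
    (lc : ∀ t a b, r t a → r t b →
      ∃ d, Relation.ReflTransGen r a d ∧ Relation.ReflTransGen r b d) :
    ∀ a b c, Relation.ReflTransGen r a b → Relation.ReflTransGen r a c →
      ∃ d, Relation.ReflTransGen r b d ∧ Relation.ReflTransGen r c d := by
  intro a
  induction a using hwf.induction with
  | _ a IH =>
    intro b c hab hac
    rcases Relation.ReflTransGen.cases_head hab with rfl | ⟨a₁, ha₁, h₁b⟩
    · exact ⟨c, hac, Relation.ReflTransGen.refl⟩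
    rcases Relation.ReflTransGen.cases_head hac with rfl | ⟨a₂, ha₂, h₂c⟩
    · exact ⟨b, Relation.ReflTransGen.refl, hab⟩
    obtain ⟨d, h1d, h2d⟩ := lc a a₁ a₂ ha₁ ha₂
    obtain ⟨e, hbe, hde⟩ := IH a₁ ha₁ b d h₁b h1d
    obtain ⟨f, hef, hcf⟩ := IH a₂ ha₂ e c (h2d.trans hde) h₂c
    exact ⟨f, hbe.trans hef, hcf⟩

end Schematic

open Schematic

theorem statement0 (F : Type) (ar : F → ℕ) (prec : F → F → Prop)
    (hirr : ∀ f, ¬ prec f f) (htrans : Transitive prec) (hwf : WellFounded prec)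
    (D : NumDefs F ar) (hD : GoodNumDefs prec D) :
    WellFounded (fun t s : NTerm F ar => NStep D s t) ∧
      ∀ a b c : NTerm F ar, Relation.ReflTransGen (NStep D) a b →
        Relation.ReflTransGen (NStep D) a c →
        ∃ d, Relation.ReflTransGen (NStep D) b d ∧ Relation.ReflTransGen (NStep D) c d := by
  have hterm : WellFounded (fun t s : NTerm F ar => NStep D s t) := by
    refine Subrelation.wf (r := InvImage Nat.lt (evalI (Intp D hwf) fun _ => 0)) ?_
      (InvImage.wf _ Nat.lt_wfRel.wf)
    intro t s h
    exact step_dec hwf hD h fun _ => 0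
  exact ⟨hterm, newman hterm fun t a b => locConf t a b⟩
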